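/- Let n ≥ 1 be an integer, 1 < p < ∞, h > 0, and let V ⊆ ℝ^{n−1} be a measurable set. If u : ℝ^{n−1} × ℝ → ℝ is continuously differentiable and u(x,0) = 0 for every x ∈ V, then ∫_{V×(0,h)} |u(x,y)|^p dx dy ≤ (h^p / p) · ∫_{V×(0,h)} |∂_y u(x,y)|^p dx dy, as an inequality in [0,∞]. -/

import Mathlib

open MeasureTheory

/-- **Poincaré inequality with explicit constant on boundary boxes**: if `u` is `C¹` on
`ℝ^{n-1} × ℝ` and vanishes on `V × {0}`, then
`∫_{V×(0,h)} |u|^p ≤ (h^p/p) ∫_{V×(0,h)} |∂_y u|^p`, as an inequality in `[0,∞]`. -/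
theorem poincare_box (n : ℕ) (hn : 1 ≤ n) (p h : ℝ) (hp : 1 < p) (hh : 0 < h)
    (V : Set (EuclideanSpace ℝ (Fin (n - 1)))) (hV : MeasurableSet V)
    (u : EuclideanSpace ℝ (Fin (n - 1)) × ℝ → ℝ)
    (hu : ContDiff ℝ 1 u)
    (h0 : ∀ x ∈ V, u (x, 0) = 0) :
    ∫⁻ z in V ×ˢ Set.Ioo (0 : ℝ) h, ENNReal.ofReal (|u z| ^ p) ∂volume
      ≤ ENNReal.ofReal (h ^ p / p) *
        ∫⁻ z in V ×ˢ Set.Ioo (0 : ℝ) h,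
          ENNReal.ofReal
            (|fderiv ℝ u z ((0 : EuclideanSpace ℝ (Fin (n - 1))), (1 : ℝ))| ^ p) ∂volume := by
  have hp0 : (0 : ℝ) < p := lt_trans one_pos hp
  set g : EuclideanSpace ℝ (Fin (n - 1)) × ℝ → ℝ := fun z => fderiv ℝ u z ((0 : EuclideanSpace ℝ (Fin (n - 1))), (1 : ℝ)) with hg_def
  have hg_cont : Continuous g := by
    have : Continuous fun z : EuclideanSpace ℝ (Fin (n - 1)) × ℝ => fderiv ℝ u z ((0 : EuclideanSpace ℝ (Fin (n - 1))), (1 : ℝ)) :=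
      (hu.continuous_fderiv one_ne_zero).clm_apply continuous_const
    exact this
  have hu_cont : Continuous u := hu.continuous
  -- derivative of the slice
  have hderiv : ∀ (x : EuclideanSpace ℝ (Fin (n - 1))) (y : ℝ), HasDerivAt (fun t => u (x, t)) (g (x, y)) y := by
    intro x y
    have h1 : HasDerivAt (fun t : ℝ => ((x, t) : EuclideanSpace ℝ (Fin (n - 1)) × ℝ)) ((0 : EuclideanSpace ℝ (Fin (n - 1))), (1 : ℝ)) y :=
      (hasDerivAt_const y x).prodMk (hasDerivAt_id y)
    exact ((hu.differentiable one_ne_zero (x, y)).hasFDerivAt.comp_hasDerivAt y h1)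
  -- conjugate exponent
  obtain ⟨q, hpq⟩ : ∃ q, p.HolderConjugate q := ⟨_, Real.HolderConjugate.conjExponent hp⟩
  -- inner (1-dimensional) inequality
  have key : ∀ x ∈ V,
      ∫⁻ y in Set.Ioo (0 : ℝ) h, ENNReal.ofReal (|u (x, y)| ^ p)
        ≤ ENNReal.ofReal (h ^ p / p) *
          ∫⁻ y in Set.Ioo (0 : ℝ) h, ENNReal.ofReal (|g (x, y)| ^ p) := by
    intro x hx
    set G : ℝ → ENNReal := fun t => ENNReal.ofReal |g (x, t)| with hG_def
    have hGmeas : Measurable G :=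
      (ENNReal.measurable_ofReal.comp ((hg_cont.comp (Continuous.prodMk_right x)).abs.measurable))
    set A : ENNReal := ∫⁻ t in Set.Ioo (0 : ℝ) h, G t ^ p with hA_def
    -- pointwise bound
    have hpt : ∀ y ∈ Set.Ioo (0 : ℝ) h,
        ENNReal.ofReal (|u (x, y)| ^ p) ≤ ENNReal.ofReal y ^ (p - 1) * A := by
      intro y hy
      have hy0 : 0 < y := hy.1
      -- FTC
      have hftc : u (x, y) = ∫ t in (0 : ℝ)..y, g (x, t) := by
        have h2 := intervalIntegral.integral_eq_sub_of_hasDerivAt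
          (f := fun t => u (x, t)) (f' := fun t => g (x, t)) (a := (0 : ℝ)) (b := y)
          (fun t _ => hderiv x t)
          ((hg_cont.comp (Continuous.prodMk_right x)).intervalIntegrable 0 y)
        rw [h2]
        rw [h0 x hx, sub_zero]
      have habs : |u (x, y)| ≤ ∫ t in (0 : ℝ)..y, |g (x, t)| := by
        rw [hftc]
        exact intervalIntegral.abs_integral_le_integral_abs hy0.le
      -- go to lintegral
      have hofReal : ENNReal.ofReal |u (x, y)| ≤ ∫⁻ t in Set.Ioo (0 : ℝ) y, G t := by
        refine le_trans (ENNReal.ofReal_le_ofReal habs) ?_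
        rw [intervalIntegral.integral_of_le hy0.le,
          ← MeasureTheory.restrict_Ioo_eq_restrict_Ioc]
        rw [ofReal_integral_eq_lintegral_ofReal]
        · exact ((hg_cont.comp (Continuous.prodMk_right x)).abs.integrableOn_Ioc).mono_set
            Set.Ioo_subset_Ioc_self
        · exact Filter.Eventually.of_forall fun t => abs_nonneg _
      -- Hölder
      have hholder : (∫⁻ t in Set.Ioo (0 : ℝ) y, G t)
          ≤ ((∫⁻ t in Set.Ioo (0 : ℝ) y, G t ^ p) ^ (1 / p)) * ENNReal.ofReal y ^ (1 / q) := by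
        have hH := ENNReal.lintegral_mul_le_Lp_mul_Lq (volume.restrict (Set.Ioo (0 : ℝ) y)) hpq
          hGmeas.aemeasurable (aemeasurable_const (b := (1 : ENNReal)))
        simpa [Real.volume_Ioo, sub_zero] using hH
      -- raise to power p
      have hup : ENNReal.ofReal (|u (x, y)| ^ p) = ENNReal.ofReal |u (x, y)| ^ p :=
        (ENNReal.ofReal_rpow_of_nonneg (abs_nonneg _) hp0.le).symm
      rw [hup]
      calc ENNReal.ofReal |u (x, y)| ^ p
          ≤ (((∫⁻ t in Set.Ioo (0 : ℝ) y, G t ^ p) ^ (1 / p)) * ENNReal.ofReal y ^ (1 / q)) ^ p :=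
            ENNReal.rpow_le_rpow (hofReal.trans hholder) hp0.le
        _ = (∫⁻ t in Set.Ioo (0 : ℝ) y, G t ^ p) * ENNReal.ofReal y ^ (p - 1) := by
            rw [ENNReal.mul_rpow_of_nonneg _ _ hp0.le, ← ENNReal.rpow_mul, ← ENNReal.rpow_mul,
              one_div_mul_cancel hp0.ne', ENNReal.rpow_one]
            congr 1
            rw [one_div, inv_mul_eq_div, hpq.div_conj_eq_sub_one]
        _ ≤ A * ENNReal.ofReal y ^ (p - 1) := by
            gcongr
            exact lintegral_mono_set (Set.Ioo_subset_Ioo le_rfl hy.2.le)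
        _ = ENNReal.ofReal y ^ (p - 1) * A := mul_comm _ _
    -- integrate the pointwise bound
    calc ∫⁻ y in Set.Ioo (0 : ℝ) h, ENNReal.ofReal (|u (x, y)| ^ p)
        ≤ ∫⁻ y in Set.Ioo (0 : ℝ) h, ENNReal.ofReal y ^ (p - 1) * A :=
          setLIntegral_mono' measurableSet_Ioo hpt
      _ = (∫⁻ y in Set.Ioo (0 : ℝ) h, ENNReal.ofReal y ^ (p - 1)) * A :=
          lintegral_mul_const _ (ENNReal.measurable_ofReal.pow_const _)
      _ = ENNReal.ofReal (h ^ p / p) * A := by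
          congr 1
          have hcong : ∀ y ∈ Set.Ioo (0 : ℝ) h,
              ENNReal.ofReal y ^ (p - 1) = ENNReal.ofReal (y ^ (p - 1)) := fun y hy =>
            ENNReal.ofReal_rpow_of_nonneg hy.1.le (by linarith)
          rw [setLIntegral_congr_fun measurableSet_Ioo hcong]
          rw [← ofReal_integral_eq_lintegral_ofReal]
          · congr 1
            have hpe : p - 1 + 1 = p := by ring
            rw [MeasureTheory.restrict_Ioo_eq_restrict_Ioc,
              ← intervalIntegral.integral_of_le hh.le,
              integral_rpow (Or.inl (by linarith)), hpe,
              Real.zero_rpow hp0.ne', sub_zero]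
          · have hii : IntervalIntegrable (fun y : ℝ => y ^ (p - 1)) volume 0 h :=
              intervalIntegral.intervalIntegrable_rpow' (by linarith)
            have h2 := (intervalIntegrable_iff_integrableOn_Ioc_of_le hh.le).mp hii
            rw [MeasureTheory.restrict_Ioo_eq_restrict_Ioc]
            exact h2
          · filter_upwards [ae_restrict_mem measurableSet_Ioo] with y hy using
              Real.rpow_nonneg hy.1.le _
      _ = ENNReal.ofReal (h ^ p / p) *
            ∫⁻ y in Set.Ioo (0 : ℝ) h, ENNReal.ofReal (|g (x, y)| ^ p) := by
          congr 1
          refine setLIntegral_congr_fun measurableSet_Ioo ?_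
          intro t _
          rw [hG_def]
          exact ENNReal.ofReal_rpow_of_nonneg (abs_nonneg _) hp0.le
  -- Tonelli
  have hprod : (volume : Measure (EuclideanSpace ℝ (Fin (n - 1)) × ℝ)).restrict (V ×ˢ Set.Ioo (0 : ℝ) h)
      = (volume.restrict V).prod (volume.restrict (Set.Ioo (0 : ℝ) h)) := by
    rw [MeasureTheory.Measure.volume_eq_prod, Measure.prod_restrict]
  have hmeas1 : AEMeasurable (fun z : EuclideanSpace ℝ (Fin (n - 1)) × ℝ => ENNReal.ofReal (|u z| ^ p))
      ((volume.restrict V).prod (volume.restrict (Set.Ioo (0 : ℝ) h))) :=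
    (ENNReal.measurable_ofReal.comp (hu_cont.abs.measurable.pow_const _)).aemeasurable
  have hmeas2 : AEMeasurable (fun z : EuclideanSpace ℝ (Fin (n - 1)) × ℝ => ENNReal.ofReal (|g z| ^ p))
      ((volume.restrict V).prod (volume.restrict (Set.Ioo (0 : ℝ) h))) :=
    (ENNReal.measurable_ofReal.comp (hg_cont.abs.measurable.pow_const _)).aemeasurable
  rw [hprod, lintegral_prod _ hmeas1, lintegral_prod _ hmeas2]
  calc ∫⁻ x in V, ∫⁻ y in Set.Ioo (0 : ℝ) h, ENNReal.ofReal (|u (x, y)| ^ p)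
      ≤ ∫⁻ x in V, ENNReal.ofReal (h ^ p / p) *
          ∫⁻ y in Set.Ioo (0 : ℝ) h, ENNReal.ofReal (|g (x, y)| ^ p) :=
        setLIntegral_mono' hV key
    _ = ENNReal.ofReal (h ^ p / p) *
          ∫⁻ x in V, ∫⁻ y in Set.Ioo (0 : ℝ) h, ENNReal.ofReal (|g (x, y)| ^ p) :=
        lintegral_const_mul' _ _ ENNReal.ofReal_ne_top
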